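/- The monomial ideal I_{n,t} generated by the monomials x^{e_i} = x_1^t⋯x_{i-1}^t x_{i+1}^t⋯x_n^t for i = 1,…,n equals the intersection ⋂_{1 ≤ i < j ≤ n} ⟨x_i^t, x_j^t⟩. -/

import Mathlib

open MvPolynomial Finset

lemma prodX_eq_monomial {k : Type*} [Field k] {n : ℕ} (s : Finset (Fin n)) (t : ℕ) :
    ∏ j ∈ s, (X j : MvPolynomial (Fin n) k) ^ t
      = monomial (∑ j ∈ s, Finsupp.single j t) 1 := by
  induction s using Finset.cons_induction with
  | empty => simp
  | cons a s ha ih =>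
      rw [Finset.prod_cons, Finset.sum_cons, ih, X_pow_eq_monomial, monomial_mul, one_mul]

lemma E_apply {n : ℕ} (i a : Fin n) (t : ℕ) :
    (∑ j ∈ Finset.univ.erase i, Finsupp.single j t) a = if a = i then 0 else t := by
  classical
  rw [Finsupp.finset_sum_apply]
  simp only [Finsupp.single_apply]
  rw [Finset.sum_ite_eq' (Finset.univ.erase i) a (fun _ => t)]
  by_cases h : a = i <;> simp [h]

/-- The monomial ideal `I_{n,t}` generated by the monomials
`x^{e_i} = ∏_{j ≠ i} x_j^t` equals `⋂_{i < j} ⟨x_i^t, x_j^t⟩`. -/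
theorem stmt_0 (k : Type*) [Field k] (n t : ℕ) (hn : 3 ≤ n) (ht : 1 ≤ t) :
    Ideal.span (Set.range fun i : Fin n =>
        ∏ j ∈ Finset.univ.erase i, (X j : MvPolynomial (Fin n) k) ^ t)
      = ⨅ (i : Fin n) (j : Fin n) (_ : i < j),
          Ideal.span {(X i : MvPolynomial (Fin n) k) ^ t, (X j) ^ t} := by
  classical
  have hE : ∀ i : Fin n, ∀ d : Fin n →₀ ℕ,
      (∑ j ∈ Finset.univ.erase i, Finsupp.single j t) ≤ d ↔ ∀ j ≠ i, t ≤ d j := by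
    intro i d
    rw [Finsupp.le_def]
    constructor
    · intro h j hj
      have := h j
      rwa [E_apply, if_neg hj] at this
    · intro h a
      rw [E_apply]
      by_cases ha : a = i
      · simp [ha]
      · simpa [ha] using h a ha
  ext p
  have hL : p ∈ Ideal.span (Set.range fun i : Fin n =>
        ∏ j ∈ Finset.univ.erase i, (X j : MvPolynomial (Fin n) k) ^ t) ↔
      ∀ d ∈ p.support, ∃ i : Fin n, ∀ j ≠ i, t ≤ d j := by
    have heq : (fun i : Fin n =>
        ∏ j ∈ Finset.univ.erase i, (X j : MvPolynomial (Fin n) k) ^ t)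
        = (fun s => monomial s (1 : k)) ∘
            (fun i : Fin n => ∑ j ∈ Finset.univ.erase i, Finsupp.single j t) :=
      funext fun i => prodX_eq_monomial _ t
    rw [heq, Set.range_comp]
    rw [mem_ideal_span_monomial_image]
    simp only [Set.mem_range, exists_exists_eq_and]
    exact forall₂_congr fun d _ => exists_congr fun i => hE i d
  rw [hL]
  simp only [Ideal.mem_iInf]
  constructor
  · intro h i j hij
    rw [show ({(X i : MvPolynomial (Fin n) k) ^ t, (X j) ^ t} : Set (MvPolynomial (Fin n) k))
        = (fun s => monomial s (1 : k)) '' {Finsupp.single i t, Finsupp.single j t} by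
      simp [Set.image_pair, X_pow_eq_monomial]]
    rw [mem_ideal_span_monomial_image]
    intro d hd
    obtain ⟨a, ha⟩ := h d hd
    rcases ne_or_eq i a with hia | hia
    · exact ⟨Finsupp.single i t, Set.mem_insert _ _, Finsupp.single_le_iff.2 (ha i hia)⟩
    · refine ⟨Finsupp.single j t, Set.mem_insert_of_mem _ rfl,
        Finsupp.single_le_iff.2 (ha j ?_)⟩
      rw [← hia]; exact hij.ne'
  · intro h d hd
    by_cases hall : ∀ j : Fin n, t ≤ d j
    · exact ⟨⟨0, by omega⟩, fun j _ => hall j⟩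
    · push_neg at hall
      obtain ⟨a, ha⟩ := hall
      refine ⟨a, fun j hj => ?_⟩
      have key : ∀ i i' : Fin n, i < i' → t ≤ d i ∨ t ≤ d i' := by
        intro i i' hii
        have := h i i' hii
        rw [show ({(X i : MvPolynomial (Fin n) k) ^ t, (X i') ^ t} : Set (MvPolynomial (Fin n) k))
            = (fun s => monomial s (1 : k)) '' {Finsupp.single i t, Finsupp.single i' t} by
          simp [Set.image_pair, X_pow_eq_monomial], mem_ideal_span_monomial_image] at this
        obtain ⟨s, hs, hsd⟩ := this d hd
        rcases hs with rfl | hs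
        · exact Or.inl (Finsupp.single_le_iff.1 hsd)
        · rcases hs with rfl
          exact Or.inr (Finsupp.single_le_iff.1 hsd)
      rcases lt_or_gt_of_ne hj with hlt | hlt
      · rcases key j a hlt with h' | h'
        · exact h'
        · omega
      · rcases key a j hlt with h' | h'
        · omega
        · exact h'
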